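/- Let K(ζ₁,ζ₂) be a kernel on (ℝ×ℝ^d)² satisfying |K(ζ₁,ζ₂)| ≤ C⟨t₁−t₂⟩^{-1} where ζ_i = (t_i,x_i), and let W ∈ L²_{loc} with h(t) := ‖W(t,·)‖²_{L²_x}. Define iterated kernels 𝒦₁(ζ₁,ζ₂) = W(ζ₁)W̄(ζ₂)K(ζ₁,ζ₂) and 𝒦_{2n}(ζ₁,ζ_{2n+1}) = ∫ 𝒦_n(ζ₁,ζ_{n+1})𝒦_n(ζ_{n+1},ζ_{2n+1}) dζ_{n+1} for n a power of 2. Then for all m ≥ 1, |𝒦_{2^m}(ζ₁,ζ_{2^m+1})| ≤ C^{2^m} |W(ζ₁)| |W(ζ_{2^m+1})| ∫_{ℝ^{2^m−1}} Π_{j=2}^{2^m} h(t_j) Π_{k=1}^{2^m} ⟨t_k − t_{k+1}⟩^{-1} Π_{ℓ=2}^{2^m} dt_ℓ. -/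

import Mathlib

open MeasureTheory ENNReal

set_option maxHeartbeats 1000000

/-- The chain of time variables `t_1 = a, t_2, …, t_N, t_{N+1} = b` built from the
`N-1` intermediate variables `s`. -/
def chainPts (N : ℕ) (a b : ℝ) (s : Fin (N - 1) → ℝ) (k : Fin (N + 1)) : ℝ :=
  if h0 : (k : ℕ) = 0 then a
  else if hN : (k : ℕ) = N then b
  else s ⟨(k : ℕ) - 1, by have := k.isLt; omega⟩

set_option maxHeartbeats 1000000


namespace Stmt19Aux

/-- Existence of a measurable "lower envelope" of an arbitrary `ℝ≥0∞`-valued function: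
a measurable a.e.-minorant which a.e.-dominates every measurable a.e.-minorant. -/
theorem exists_envelope {α : Type*} [MeasurableSpace α] (μ : Measure α) [SFinite μ]
    (w : α → ℝ≥0∞) :
    ∃ v : α → ℝ≥0∞, Measurable v ∧ v ≤ᵐ[μ] w ∧
      ∀ u : α → ℝ≥0∞, Measurable u → u ≤ᵐ[μ] w → u ≤ᵐ[μ] v := by
  classical
  set ν := μ.toFinite with hν
  have hae : ae ν = ae μ := ae_toFinite
  -- it suffices to find an envelope w.r.t. ν
  suffices h : ∃ v : α → ℝ≥0∞, Measurable v ∧ v ≤ᵐ[ν] w ∧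
      ∀ u : α → ℝ≥0∞, Measurable u → u ≤ᵐ[ν] w → u ≤ᵐ[ν] v by
    obtain ⟨v, hv1, hv2, hv3⟩ := h
    refine ⟨v, hv1, ?_, fun u hu1 hu2 => ?_⟩
    · have := hv2; rwa [Filter.EventuallyLE, hae] at this
    · have hu2' : u ≤ᵐ[ν] w := by rwa [Filter.EventuallyLE, hae]
      have := hv3 u hu1 hu2'
      rwa [Filter.EventuallyLE, hae] at this
  -- the functional to minimize
  set Φ : (α → ℝ≥0∞) → ℝ≥0∞ := fun v => ∫⁻ a, (v a + 1)⁻¹ ∂ν with hΦ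
  have hΦ_le : ∀ v : α → ℝ≥0∞, Φ v ≤ ν Set.univ := by
    intro v
    calc Φ v ≤ ∫⁻ _, 1 ∂ν := lintegral_mono fun a => by
          simpa using ENNReal.inv_le_one.2 le_add_self
      _ = ν Set.univ := by simp
  have hνfin : ν Set.univ ≠ ∞ := measure_ne_top ν _
  have hΦfin : ∀ v, Φ v ≠ ∞ := fun v => ne_top_of_le_ne_top hνfin (hΦ_le v)
  -- Φ is antitone
  have hΦ_anti : ∀ {u v : α → ℝ≥0∞}, (∀ a, u a ≤ v a) → Φ v ≤ Φ u := by
    intro u v huv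
    exact lintegral_mono fun a => ENNReal.inv_le_inv.2 (add_le_add_left (huv a) 1)
  set S : Set (α → ℝ≥0∞) := {v | Measurable v ∧ v ≤ᵐ[ν] w} with hS
  have h0S : (fun _ => (0 : ℝ≥0∞)) ∈ S :=
    ⟨measurable_const, Filter.Eventually.of_forall fun _ => zero_le⟩
  set c : ℝ≥0∞ := ⨅ v : S, Φ v with hc
  have hcfin : c ≠ ∞ := by
    refine ne_top_of_le_ne_top hνfin ?_
    exact le_trans (iInf_le _ ⟨_, h0S⟩) (hΦ_le _)
  -- choose a minimizing sequence
  have hseq : ∀ n : ℕ, ∃ v : S, Φ v < c + (n : ℝ≥0∞)⁻¹ := by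
    intro n
    have hlt : c < c + (n : ℝ≥0∞)⁻¹ :=
      ENNReal.lt_add_right hcfin (by simp)
    rw [hc] at hlt
    obtain ⟨v, hv⟩ := iInf_lt_iff.1 hlt
    exact ⟨v, by rw [hc]; exact hv⟩
  choose vs hvs using hseq
  set V : α → ℝ≥0∞ := fun a => ⨆ n, (vs n : α → ℝ≥0∞) a with hV
  have hVmeas : Measurable V := Measurable.iSup fun n => (vs n).2.1
  have hVle : V ≤ᵐ[ν] w := by
    have : ∀ᵐ a ∂ν, ∀ n : ℕ, (vs n : α → ℝ≥0∞) a ≤ w a := ae_all_iff.2 fun n => (vs n).2.2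
    filter_upwards [this] with a ha
    exact iSup_le ha
  have hVS : V ∈ S := ⟨hVmeas, hVle⟩
  -- Φ V = c
  have hΦVc : Φ V = c := by
    refine le_antisymm ?_ (iInf_le (fun v : S => Φ v) ⟨V, hVS⟩)
    refine ENNReal.le_of_forall_pos_le_add fun ε hε _ => ?_
    obtain ⟨n, hn⟩ := ENNReal.exists_inv_nat_lt (show (ε : ℝ≥0∞) ≠ 0 by simpa using hε.ne')
    calc Φ V ≤ Φ (vs n) := hΦ_anti fun a => le_iSup (fun m => (vs m : α → ℝ≥0∞) a) n
      _ ≤ c + (n : ℝ≥0∞)⁻¹ := (hvs n).le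
      _ ≤ c + ε := add_le_add_right hn.le _
  refine ⟨V, hVmeas, hVle, ?_⟩
  -- maximality
  intro u hu hule
  by_contra hcon
  have hpos : ν {a | V a < u a} ≠ 0 := by
    intro h0
    apply hcon
    have : ∀ᵐ a ∂ν, ¬ V a < u a := by
      rw [ae_iff]; simpa using h0
    filter_upwards [this] with a ha using not_lt.1 ha
  set T : α → ℝ≥0∞ := fun a => u a ⊔ V a with hT
  have hTS : T ∈ S := by
    refine ⟨hu.sup hVmeas, ?_⟩
    filter_upwards [hule, hVle] with a h1 h2 using sup_le h1 h2
  have hstrict : Φ T < Φ V := by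
    refine lintegral_strict_mono_of_ae_le_of_ae_lt_on
      (hVmeas.add measurable_const).inv.aemeasurable (hΦfin T)
      (Filter.Eventually.of_forall fun a => ?_)
      (s := {a | V a < u a}) hpos
      (Filter.Eventually.of_forall fun a ha => ?_)
    · exact ENNReal.inv_le_inv.2 (add_le_add_left (le_sup_right) 1)
    · have hVlt : V a < u a := ha
      have h1 : V a + 1 < T a + 1 := by
        have hTa : T a = u a := sup_eq_left.2 hVlt.le
        rw [hTa]
        exact (ENNReal.add_lt_add_iff_right one_ne_top).2 hVlt
      exact ENNReal.inv_lt_inv.2 h1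
  have : c ≤ Φ T := iInf_le (fun v : S => Φ v) ⟨T, hTS⟩
  rw [← hΦVc] at this
  exact absurd (lt_of_le_of_lt this hstrict) (lt_irrefl _)


/-- The time-decay weight `⟨a-b⟩⁻¹` as an `ℝ≥0∞` number. -/
noncomputable def jw (a b : ℝ) : ℝ≥0∞ := ENNReal.ofReal ((1 + |a - b|)⁻¹)

lemma jw_pos (a b : ℝ) : 0 < jw a b := by
  unfold jw
  apply ENNReal.ofReal_pos.2
  positivity

lemma jw_ne_top (a b : ℝ) : jw a b ≠ ∞ := ENNReal.ofReal_ne_top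

lemma measurable_jw : Measurable (fun p : ℝ × ℝ => jw p.1 p.2) := by
  apply ENNReal.measurable_ofReal.comp
  have h : Continuous fun p : ℝ × ℝ => (1 + |p.1 - p.2|)⁻¹ := by
    apply Continuous.inv₀
    · exact continuous_const.add (continuous_fst.sub continuous_snd).abs
    · intro x; positivity
  exact h.measurable

/-- Peetre-type comparability in the first argument. -/
lemma jw_fst (a a' b : ℝ) : jw a b ≤ ENNReal.ofReal (1 + |a - a'|) * jw a' b := by
  unfold jw
  rw [← ENNReal.ofReal_mul (by positivity)]
  apply ENNReal.ofReal_le_ofReal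
  rw [← div_eq_mul_inv, le_div_iff₀ (by positivity), inv_mul_eq_div,
    div_le_iff₀ (by positivity)]
  nlinarith [abs_sub_le a' a b, abs_sub_comm a a', abs_nonneg (a' - a), abs_nonneg (a - b),
    abs_nonneg (a - a'), mul_nonneg (abs_nonneg (a - a')) (abs_nonneg (a - b))]

/-- Peetre-type comparability in the second argument. -/
lemma jw_snd (a b b' : ℝ) : jw a b ≤ ENNReal.ofReal (1 + |b - b'|) * jw a b' := by
  unfold jw
  rw [← ENNReal.ofReal_mul (by positivity)]
  apply ENNReal.ofReal_le_ofReal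
  rw [← div_eq_mul_inv, le_div_iff₀ (by positivity), inv_mul_eq_div,
    div_le_iff₀ (by positivity)]
  nlinarith [abs_sub_le a b b', abs_sub_comm b b', abs_nonneg (b - b'), abs_nonneg (a - b),
    mul_nonneg (abs_nonneg (b - b')) (abs_nonneg (a - b))]


/-- The iterated (dyadic) chain bound built from a measurable weight `G`. -/
noncomputable def Dm (G : ℝ → ℝ≥0∞) : ℕ → ℝ → ℝ → ℝ≥0∞
  | 0, a, b => jw a b
  | (n+1), a, b => ∫⁻ t : ℝ, G t * (Dm G n a t * Dm G n t b)

lemma measurable_Dm (G : ℝ → ℝ≥0∞) (hG : Measurable G) (n : ℕ) :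
    Measurable (fun p : ℝ × ℝ => Dm G n p.1 p.2) := by
  induction n with
  | zero => exact measurable_jw
  | succ n ih =>
    have h : Measurable (fun q : (ℝ × ℝ) × ℝ =>
        G q.2 * (Dm G n q.1.1 q.2 * Dm G n q.2 q.1.2)) := by
      apply Measurable.mul
      · exact hG.comp measurable_snd
      · exact (ih.comp ((measurable_fst.comp measurable_fst).prodMk measurable_snd)).mul
          (ih.comp (measurable_snd.prodMk (measurable_snd.comp measurable_fst)))
    exact h.lintegral_prod_right'

lemma Dm_compare (G : ℝ → ℝ≥0∞) (hG : Measurable G) (n : ℕ) (a b a' b' : ℝ) :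
    Dm G n a b ≤ ENNReal.ofReal (1 + |a - a'|) * (ENNReal.ofReal (1 + |b - b'|) *
      Dm G n a' b') := by
  induction n generalizing a b a' b' with
  | zero =>
    show jw a b ≤ _
    calc jw a b ≤ ENNReal.ofReal (1 + |a - a'|) * jw a' b := jw_fst a a' b
      _ ≤ ENNReal.ofReal (1 + |a - a'|) * (ENNReal.ofReal (1 + |b - b'|) * jw a' b') :=
        mul_le_mul_right (jw_snd a' b b') _
  | succ n ih =>
    show (∫⁻ t : ℝ, G t * (Dm G n a t * Dm G n t b)) ≤ _
    have hmono : ∀ t : ℝ, G t * (Dm G n a t * Dm G n t b) ≤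
        (ENNReal.ofReal (1 + |a - a'|) * (ENNReal.ofReal (1 + |b - b'|))) *
          (G t * (Dm G n a' t * Dm G n t b')) := by
      intro t
      have h1 : Dm G n a t ≤ ENNReal.ofReal (1 + |a - a'|) * Dm G n a' t := by
        have := ih a t a' t
        simpa using this
      have h2 : Dm G n t b ≤ ENNReal.ofReal (1 + |b - b'|) * Dm G n t b' := by
        have := ih t b t b'
        simpa using this
      calc G t * (Dm G n a t * Dm G n t b)
          ≤ G t * ((ENNReal.ofReal (1 + |a - a'|) * Dm G n a' t) *
              (ENNReal.ofReal (1 + |b - b'|) * Dm G n t b')) :=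
            mul_le_mul_right (mul_le_mul' h1 h2) _
        _ = (ENNReal.ofReal (1 + |a - a'|) * (ENNReal.ofReal (1 + |b - b'|))) *
              (G t * (Dm G n a' t * Dm G n t b')) := by ring
    calc (∫⁻ t : ℝ, G t * (Dm G n a t * Dm G n t b))
        ≤ ∫⁻ t : ℝ, (ENNReal.ofReal (1 + |a - a'|) * (ENNReal.ofReal (1 + |b - b'|))) *
            (G t * (Dm G n a' t * Dm G n t b')) := lintegral_mono hmono
      _ = (ENNReal.ofReal (1 + |a - a'|) * (ENNReal.ofReal (1 + |b - b'|))) *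
            ∫⁻ t : ℝ, G t * (Dm G n a' t * Dm G n t b') := by
          apply lintegral_const_mul
          apply Measurable.mul hG
          exact ((measurable_Dm G hG n).comp (measurable_const.prodMk measurable_id)).mul
            ((measurable_Dm G hG n).comp (measurable_id.prodMk measurable_const))
      _ = _ := by
          rw [mul_assoc]
          rfl

lemma Dm_top (G : ℝ → ℝ≥0∞) (hG : Measurable G) (n : ℕ) (a b : ℝ)
    (h : Dm G n a b = ∞) : ∀ a' b', Dm G n a' b' = ∞ := by
  intro a' b'
  by_contra hne
  have := Dm_compare G hG n a b a' b'
  rw [h] at this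
  have hfin : ENNReal.ofReal (1 + |a - a'|) * (ENNReal.ofReal (1 + |b - b'|) * Dm G n a' b') ≠ ∞ := by
    apply ENNReal.mul_ne_top ENNReal.ofReal_ne_top
    exact ENNReal.mul_ne_top ENNReal.ofReal_ne_top hne
  exact hfin (top_le_iff.1 this)


/-- Key inequality: integrating an arbitrary function `w` against a measurable, everywhere
finite weight depending only on the first coordinate can be estimated by the corresponding
integral of the measurable envelope `wE`. -/
theorem key_push {α β : Type*} [MeasurableSpace α] [MeasurableSpace β]
    (μ : Measure α) (ν : Measure β) [SigmaFinite μ] [SigmaFinite ν]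
    (w wE : α × β → ℝ≥0∞) (hwE : Measurable wE)
    (hmax : ∀ u : α × β → ℝ≥0∞, Measurable u → u ≤ᵐ[μ.prod ν] w → u ≤ᵐ[μ.prod ν] wE)
    (Ψ : α → ℝ≥0∞) (hΨm : Measurable Ψ) (hΨ : ∀ t, Ψ t ≠ ∞) :
    ∫⁻ η, w η * Ψ η.1 ∂(μ.prod ν) ≤ ∫⁻ t, (∫⁻ x, wE (t, x) ∂ν) * Ψ t ∂μ := by
  rw [← iSup_lintegral_measurable_le_eq_lintegral (fun η => w η * Ψ η.1)]
  refine iSup_le fun ρ => iSup_le fun hρm => iSup_le fun hρle => ?_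
  set v : α × β → ℝ≥0∞ := fun η => ρ η / Ψ η.1 with hv
  have hvm : Measurable v := hρm.div (hΨm.comp measurable_fst)
  have hvle : ∀ η, v η ≤ w η := by
    intro η
    by_cases h0 : Ψ η.1 = 0
    · have hρ0 : ρ η = 0 := le_antisymm (by simpa [h0] using hρle η) (zero_le)
      simp [hv, hρ0]
    · exact (ENNReal.div_le_iff_le_mul (Or.inl h0) (Or.inl (hΨ η.1))).2 (hρle η)
  have hvwE : v ≤ᵐ[μ.prod ν] wE := hmax v hvm (Filter.Eventually.of_forall hvle)
  calc ∫⁻ η, ρ η ∂(μ.prod ν) ≤ ∫⁻ η, v η * Ψ η.1 ∂(μ.prod ν) := by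
        apply lintegral_mono
        intro η
        by_cases h0 : Ψ η.1 = 0
        · have hρ0 : ρ η = 0 := le_antisymm (by simpa [h0] using hρle η) (zero_le)
          simp [hρ0]
        · rw [hv]
          simp only []
          rw [ENNReal.div_mul_cancel h0 (hΨ η.1)]
    _ ≤ ∫⁻ η, wE η * Ψ η.1 ∂(μ.prod ν) := by
        apply lintegral_mono_ae
        filter_upwards [hvwE] with η hη using mul_le_mul_left hη _
    _ = ∫⁻ t, ∫⁻ x, wE (t, x) * Ψ t ∂ν ∂μ :=
        lintegral_prod _ (hwE.mul (hΨm.comp measurable_fst)).aemeasurable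
    _ = ∫⁻ t, (∫⁻ x, wE (t, x) ∂ν) * Ψ t ∂μ := by
        apply lintegral_congr
        intro t
        exact lintegral_mul_const' (Ψ t) _ (hΨ t)


lemma chainPts_zero (N : ℕ) (a b : ℝ) (s : Fin (N - 1) → ℝ) :
    chainPts N a b s 0 = a := dif_pos rfl

lemma chainPts_succ (n : ℕ) (a b t : ℝ) (s : Fin n → ℝ) (j : Fin (n + 2)) :
    chainPts (n + 2) a b (Fin.cons t s) j.succ = chainPts (n + 1) t b s j := by
  unfold chainPts
  simp only [Fin.val_succ]
  by_cases hb : (j : ℕ) = n + 1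
  · rw [dif_neg (by omega), dif_pos (by omega), dif_neg (by omega), dif_pos hb]
  · by_cases h0 : (j : ℕ) = 0
    · rw [dif_neg (by omega), dif_neg (by omega), dif_pos h0]
      have h1 : ((j : ℕ) + 1 - 1) = 0 := by omega
      simp only [h1, Fin.mk_zero, Fin.cons_zero]
    · obtain ⟨l, hl⟩ : ∃ l, (j : ℕ) = l + 1 := ⟨(j : ℕ) - 1, by omega⟩
      rw [dif_neg (by omega), dif_neg (by omega), dif_neg h0, dif_neg hb]
      have h1 : ((j : ℕ) + 1 - 1) = l + 1 := by omega
      have h2 : ((j : ℕ) - 1) = l := by omega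
      simp only [h1, h2]
      have h3 : (⟨l + 1, by omega⟩ : Fin (n + 1)) =
          Fin.succ ⟨l, by omega⟩ := rfl
      rw [h3, Fin.cons_succ]

/-- The chain integral of length `n+1` (with `n` intermediate integration variables). -/
noncomputable def Bn (G : ℝ → ℝ≥0∞) (n : ℕ) (a b : ℝ) : ℝ≥0∞ :=
  ∫⁻ s : Fin n → ℝ, (∏ i, G (s i)) *
    ∏ k : Fin (n + 1), jw (chainPts (n + 1) a b s k.castSucc) (chainPts (n + 1) a b s k.succ)

lemma measurable_Bn_integrand (G : ℝ → ℝ≥0∞) (hG : Measurable G) (n : ℕ) :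
    Measurable (fun q : (ℝ × ℝ) × (Fin n → ℝ) => (∏ i, G (q.2 i)) *
      ∏ k : Fin (n + 1), jw (chainPts (n + 1) q.1.1 q.1.2 q.2 k.castSucc)
        (chainPts (n + 1) q.1.1 q.1.2 q.2 k.succ)) := by
  have hchain : ∀ k : Fin (n + 2), Measurable (fun q : (ℝ × ℝ) × (Fin n → ℝ) =>
      chainPts (n + 1) q.1.1 q.1.2 q.2 k) := by
    intro k
    unfold chainPts
    by_cases h0 : (k : ℕ) = 0
    · simpa [h0] using (measurable_fst.fst : Measurable fun q : (ℝ × ℝ) × (Fin n → ℝ) => q.1.1)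
    · by_cases hN : (k : ℕ) = n + 1
      · simp only [dif_neg h0, dif_pos hN]
        exact measurable_snd.comp measurable_fst
      · simp only [dif_neg h0, dif_neg hN]
        exact (measurable_pi_apply _).comp measurable_snd
  apply Measurable.mul
  · apply Finset.measurable_prod
    intro i _
    exact hG.comp ((measurable_pi_apply i).comp measurable_snd)
  · apply Finset.measurable_prod
    intro k _
    exact measurable_jw.comp ((hchain k.castSucc).prodMk (hchain k.succ))

lemma measurable_Bn_integrand' (G : ℝ → ℝ≥0∞) (hG : Measurable G) (n : ℕ) (a b : ℝ) :
    Measurable (fun s : Fin n → ℝ => (∏ i, G (s i)) *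
      ∏ k : Fin (n + 1), jw (chainPts (n + 1) a b s k.castSucc)
        (chainPts (n + 1) a b s k.succ)) := by
  have := (measurable_Bn_integrand G hG n).comp
    ((measurable_const (a := (a, b))).prodMk measurable_id)
  exact this

lemma measurable_Bn (G : ℝ → ℝ≥0∞) (hG : Measurable G) (n : ℕ) :
    Measurable (fun z : ℝ × ℝ => Bn G n z.1 z.2) :=
  (measurable_Bn_integrand G hG n).lintegral_prod_right'

lemma Bn_zero (G : ℝ → ℝ≥0∞) (a b : ℝ) : Bn G 0 a b = jw a b := by
  unfold Bn
  have h1 : ∀ s : Fin 0 → ℝ, (∏ i, G (s i)) *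
      ∏ k : Fin 1, jw (chainPts 1 a b s k.castSucc) (chainPts 1 a b s k.succ) = jw a b := by
    intro s
    rw [Finset.univ_eq_empty, Finset.prod_empty, one_mul, Fin.prod_univ_one]
    congr 1
  rw [lintegral_congr h1, lintegral_const]
  have h2 : (volume : Measure (Fin 0 → ℝ)) Set.univ = 1 := by
    rw [volume_pi, Measure.pi_univ]
    simp
  rw [h2, mul_one]


/-- Peeling off the first integration variable of a chain integral. -/
lemma Bn_succ (G : ℝ → ℝ≥0∞) (hG : Measurable G) (n : ℕ) (a b : ℝ) :
    Bn G (n + 1) a b = ∫⁻ t : ℝ, G t * (jw a t * Bn G n t b) := by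
  have hF := measurable_Bn_integrand' G hG (n + 1) a b
  set F : (Fin (n + 1) → ℝ) → ℝ≥0∞ := fun s => (∏ i, G (s i)) *
    ∏ k : Fin (n + 2), jw (chainPts (n + 2) a b s k.castSucc)
      (chainPts (n + 2) a b s k.succ) with hFdef
  have hmp : MeasurePreserving
      (MeasurableEquiv.piFinSuccAbove (fun _ : Fin (n + 1) => ℝ) 0).symm
      volume volume :=
    (MeasureTheory.volume_preserving_piFinSuccAbove (fun _ : Fin (n + 1) => ℝ) 0).symm _
  have h1 : Bn G (n + 1) a b = ∫⁻ p : ℝ × (Fin n → ℝ),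
      F ((MeasurableEquiv.piFinSuccAbove (fun _ : Fin (n + 1) => ℝ) 0).symm p) := by
    rw [Bn]
    rw [← hmp.lintegral_comp_emb (MeasurableEquiv.measurableEmbedding _)]
  have h2 : ∀ p : ℝ × (Fin n → ℝ),
      F ((MeasurableEquiv.piFinSuccAbove (fun _ : Fin (n + 1) => ℝ) 0).symm p) =
      (G p.1 * jw a p.1) * ((∏ i, G (p.2 i)) *
        ∏ k : Fin (n + 1), jw (chainPts (n + 1) p.1 b p.2 k.castSucc)
          (chainPts (n + 1) p.1 b p.2 k.succ)) := by
    rintro ⟨t, s⟩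
    dsimp only
    have he : (MeasurableEquiv.piFinSuccAbove (fun _ : Fin (n + 1) => ℝ) 0).symm (t, s) =
        Fin.cons t s := by
      rw [MeasurableEquiv.piFinSuccAbove_symm_apply]
      show Fin.insertNth (α := fun _ : Fin (n + 1) => ℝ) 0 t s = Fin.cons t s
      exact Fin.insertNth_zero' t s
    rw [he]
    simp only [hFdef]
    have hprod1 : (∏ i, G ((Fin.cons t s : Fin (n + 1) → ℝ) i)) = G t * ∏ i, G (s i) := by
      rw [Fin.prod_univ_succ]
      simp
    have hprod2 : (∏ k : Fin (n + 2), jw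
        (chainPts (n + 2) a b (Fin.cons t s : Fin (n + 1) → ℝ) k.castSucc)
        (chainPts (n + 2) a b (Fin.cons t s : Fin (n + 1) → ℝ) k.succ)) =
        jw a t * ∏ k : Fin (n + 1), jw (chainPts (n + 1) t b s k.castSucc)
          (chainPts (n + 1) t b s k.succ) := by
      rw [Fin.prod_univ_succ]
      have hz : chainPts (n + 2) a b (Fin.cons t s : Fin (n + 1) → ℝ)
          ((0 : Fin (n + 2)).castSucc) = a := by
        have h00 : ((0 : Fin (n + 2)).castSucc) = (0 : Fin (n + 3)) := rfl
        rw [h00]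
        exact chainPts_zero (n + 2) a b _
      have hs : chainPts (n + 2) a b (Fin.cons t s : Fin (n + 1) → ℝ)
          ((0 : Fin (n + 2)).succ) = t := by
        rw [chainPts_succ n a b t s 0]
        exact chainPts_zero (n + 1) t b s
      rw [hz, hs]
      congr 1
      apply Finset.prod_congr rfl
      intro k _
      rw [← Fin.succ_castSucc, chainPts_succ n a b t s k.castSucc,
        chainPts_succ n a b t s k.succ]
    rw [hprod1, hprod2]
    ring
  rw [h1, Measure.volume_eq_prod]
  rw [lintegral_prod (fun p : ℝ × (Fin n → ℝ) =>
      F ((MeasurableEquiv.piFinSuccAbove (fun _ : Fin (n + 1) => ℝ) 0).symm p))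
      ((hF.comp (MeasurableEquiv.measurable _)).aemeasurable)]
  apply lintegral_congr
  intro t
  calc (∫⁻ s : Fin n → ℝ,
        F ((MeasurableEquiv.piFinSuccAbove (fun _ : Fin (n + 1) => ℝ) 0).symm (t, s)))
      = ∫⁻ s : Fin n → ℝ, (G t * jw a t) * ((∏ i, G (s i)) *
          ∏ k : Fin (n + 1), jw (chainPts (n + 1) t b s k.castSucc)
            (chainPts (n + 1) t b s k.succ)) := lintegral_congr fun s => h2 (t, s)
    _ = (G t * jw a t) * Bn G n t b := by
        rw [lintegral_const_mul _ (measurable_Bn_integrand' G hG n t b)]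
        rfl
    _ = G t * (jw a t * Bn G n t b) := by ring


/-- Monotonicity of the chain integral under a.e. comparison of the weights. -/
lemma Bn_le_of_ae (G g' : ℝ → ℝ≥0∞) (hae : ∀ᵐ t ∂(volume : Measure ℝ), G t ≤ g' t)
    (n : ℕ) (a b : ℝ) :
    Bn G n a b ≤ ∫⁻ s : Fin n → ℝ, (∏ i, g' (s i)) *
      ∏ k : Fin (n + 1), jw (chainPts (n + 1) a b s k.castSucc)
        (chainPts (n + 1) a b s k.succ) := by
  apply lintegral_mono_ae
  have hae_pi : ∀ᵐ s : Fin n → ℝ ∂(volume : Measure (Fin n → ℝ)), ∀ i, G (s i) ≤ g' (s i) := by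
    rw [ae_all_iff]
    intro i
    rw [ae_iff] at hae ⊢
    have hset : {s : Fin n → ℝ | ¬ G (s i) ≤ g' (s i)} =
        Function.eval i ⁻¹' {t : ℝ | ¬ G t ≤ g' t} := rfl
    rw [volume_pi, hset]
    exact Measure.pi_eval_preimage_null _ hae
  filter_upwards [hae_pi] with s hs
  exact mul_le_mul_left (Finset.prod_le_prod' fun i _ => hs i) _

attribute [irreducible] Bn

/-- Gluing two chain integrals with a middle integration variable. -/
lemma Bn_split (G : ℝ → ℝ≥0∞) (hG : Measurable G) (q p : ℕ) (a b : ℝ) :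
    (∫⁻ t : ℝ, G t * (Bn G p a t * Bn G q t b)) = Bn G (p + q + 1) a b := by
  have hBnm := measurable_Bn G hG
  induction p generalizing a with
  | zero =>
    have h0 : ∀ t, G t * (Bn G 0 a t * Bn G q t b) = G t * (jw a t * Bn G q t b) := by
      intro t; rw [Bn_zero]
    rw [lintegral_congr h0, ← Bn_succ G hG q a b]
    norm_num
  | succ p ih =>
    have hf : Measurable (fun z : ℝ × ℝ =>
        G z.1 * ((G z.2 * (jw a z.2 * Bn G p z.2 z.1)) * Bn G q z.1 b)) := by
      apply (hG.comp measurable_fst).mul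
      apply Measurable.mul
      · apply (hG.comp measurable_snd).mul
        apply Measurable.mul
        · exact measurable_jw.comp (measurable_const.prodMk measurable_snd)
        · exact (hBnm p).comp (measurable_snd.prodMk measurable_fst)
      · exact (hBnm q).comp (measurable_fst.prodMk measurable_const)
    have step1 : ∀ t : ℝ, G t * (Bn G (p + 1) a t * Bn G q t b)
        = ∫⁻ r : ℝ, G t * ((G r * (jw a r * Bn G p r t)) * Bn G q t b) := by
      intro t
      rw [Bn_succ G hG p a t]
      rw [← lintegral_mul_const _ (show Measurable (fun r : ℝ => G r * (jw a r * Bn G p r t))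
        from (hG.mul ((measurable_jw.comp (measurable_const.prodMk measurable_id)).mul
          ((hBnm p).comp (measurable_id.prodMk measurable_const)))))]
      rw [← lintegral_const_mul _ (show Measurable
        (fun r : ℝ => (G r * (jw a r * Bn G p r t)) * Bn G q t b)
        from ((hG.mul ((measurable_jw.comp (measurable_const.prodMk measurable_id)).mul
          ((hBnm p).comp (measurable_id.prodMk measurable_const)))).mul measurable_const))]
    calc (∫⁻ t : ℝ, G t * (Bn G (p + 1) a t * Bn G q t b))
        = ∫⁻ t : ℝ, ∫⁻ r : ℝ, G t * ((G r * (jw a r * Bn G p r t)) * Bn G q t b) :=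
          lintegral_congr step1
      _ = ∫⁻ r : ℝ, ∫⁻ t : ℝ, G t * ((G r * (jw a r * Bn G p r t)) * Bn G q t b) :=
          lintegral_lintegral_swap hf.aemeasurable
      _ = ∫⁻ r : ℝ, (G r * jw a r) * ∫⁻ t : ℝ, G t * (Bn G p r t * Bn G q t b) := by
          apply lintegral_congr
          intro r
          rw [← lintegral_const_mul _ (show Measurable
            (fun t : ℝ => G t * (Bn G p r t * Bn G q t b)) from
            hG.mul (((hBnm p).comp (measurable_const.prodMk measurable_id)).mul
              ((hBnm q).comp (measurable_id.prodMk measurable_const))))]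
          apply lintegral_congr
          intro t
          ring
      _ = ∫⁻ r : ℝ, G r * (jw a r * Bn G (p + q + 1) r b) := by
          apply lintegral_congr
          intro r
          rw [ih r]
          ring
      _ = Bn G (p + q + 1 + 1) a b := (Bn_succ G hG (p + q + 1) a b).symm
      _ = Bn G (p + 1 + q + 1) a b := by
          congr 1
          omega

/-- The dyadic chain bound agrees with the chain integral of length `2 ^ m`. -/
lemma Dm_eq_Bn (G : ℝ → ℝ≥0∞) (hG : Measurable G) (m : ℕ) (a b : ℝ) :
    Dm G m a b = Bn G (2 ^ m - 1) a b := by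
  induction m generalizing a b with
  | zero =>
    show jw a b = Bn G (2 ^ 0 - 1) a b
    rw [show (2 ^ 0 - 1 : ℕ) = 0 from rfl, Bn_zero]
  | succ m ih =>
    show (∫⁻ t : ℝ, G t * (Dm G m a t * Dm G m t b)) = _
    have h1 : ∀ t : ℝ, G t * (Dm G m a t * Dm G m t b)
        = G t * (Bn G (2 ^ m - 1) a t * Bn G (2 ^ m - 1) t b) := by
      intro t; rw [ih, ih]
    rw [lintegral_congr h1, Bn_split G hG (2 ^ m - 1) (2 ^ m - 1) a b]
    congr 1
    have := Nat.one_le_two_pow (n := m)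
    have h2 : (2 : ℕ) ^ (m + 1) = 2 ^ m * 2 := by rw [pow_succ]
    omega

end Stmt19Aux

open Stmt19Aux

/-- Pointwise bound for iterated kernels: if `|K(ζ₁,ζ₂)| ≤ C⟨t₁-t₂⟩^{-1}`,
`𝒦₀(ζ₁,ζ₂) = W(ζ₁)W̄(ζ₂)K(ζ₁,ζ₂)` and `𝒦_{m+1}(ζ₁,ζ₂) = ∫ 𝒦_m(ζ₁,η)𝒦_m(η,ζ₂) dη`
(so `𝒦_m` is the kernel of the `2^m`-fold product), then for `m ≥ 1`
`|𝒦_m(ζ₁,ζ_{2^m+1})| ≤ C^{2^m} |W(ζ₁)||W(ζ_{2^m+1})|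
∫ Π_{j=2}^{2^m} h(t_j) Π_{k=1}^{2^m} ⟨t_k - t_{k+1}⟩^{-1} dt_2 ⋯ dt_{2^m}`,
where `h(t) = ‖W(t,·)‖²_{L²_x}`. -/
theorem stmt_19 (d : ℕ) (hd : 1 ≤ d) (C : ℝ) (hC : 0 ≤ C)
    (K : (ℝ × EuclideanSpace ℝ (Fin d)) → (ℝ × EuclideanSpace ℝ (Fin d)) → ℂ)
    (hK : ∀ ζ₁ ζ₂, ‖K ζ₁ ζ₂‖ ≤ C * (1 + |ζ₁.1 - ζ₂.1|)⁻¹)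
    (W : ℝ × EuclideanSpace ℝ (Fin d) → ℂ)
    (Kit : ℕ → (ℝ × EuclideanSpace ℝ (Fin d)) → (ℝ × EuclideanSpace ℝ (Fin d)) → ℂ)
    (hKit0 : ∀ ζ₁ ζ₂, Kit 0 ζ₁ ζ₂ = W ζ₁ * (starRingEnd ℂ) (W ζ₂) * K ζ₁ ζ₂)
    (hKitS : ∀ n ζ₁ ζ₂, Kit (n + 1) ζ₁ ζ₂ = ∫ η, Kit n ζ₁ η * Kit n η ζ₂) :
    ∀ (m N : ℕ), 1 ≤ m → N = 2 ^ m → ∀ ζ₁ ζ₂,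
      (‖Kit m ζ₁ ζ₂‖₊ : ℝ≥0∞) ≤
        ENNReal.ofReal (C ^ N) * (‖W ζ₁‖₊ : ℝ≥0∞) * (‖W ζ₂‖₊ : ℝ≥0∞) *
          ∫⁻ s : Fin (N - 1) → ℝ,
            (∏ i, ∫⁻ x : EuclideanSpace ℝ (Fin d), (‖W (s i, x)‖₊ : ℝ≥0∞) ^ 2) *
            ∏ k : Fin N, ENNReal.ofReal
              ((1 + |chainPts N ζ₁.1 ζ₂.1 s k.castSucc -
                      chainPts N ζ₁.1 ζ₂.1 s k.succ|)⁻¹) := by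
  classical
  -- Degenerate cases: the iterated kernels vanish identically.
  have hz1 : C = 0 → ∀ n ζ₁ ζ₂, Kit n ζ₁ ζ₂ = 0 := by
    intro hC0 n
    induction n with
    | zero =>
      intro ζ₁ ζ₂
      rw [hKit0]
      have hK0 : K ζ₁ ζ₂ = 0 := norm_le_zero_iff.1 (by simpa [hC0] using hK ζ₁ ζ₂)
      rw [hK0, mul_zero]
    | succ n ih =>
      intro ζ₁ ζ₂
      rw [hKitS]
      simp [ih]
  have hz2 : ∀ n (ζ₁ ζ₂ : ℝ × EuclideanSpace ℝ (Fin d)), W ζ₁ = 0 → Kit n ζ₁ ζ₂ = 0 := by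
    intro n
    induction n with
    | zero => intro ζ₁ ζ₂ h; rw [hKit0, h, zero_mul, zero_mul]
    | succ n ih =>
      intro ζ₁ ζ₂ h
      rw [hKitS]
      have : ∀ η, Kit n ζ₁ η = 0 := fun η => ih ζ₁ η h
      simp [this]
  have hz3 : ∀ n (ζ₁ ζ₂ : ℝ × EuclideanSpace ℝ (Fin d)), W ζ₂ = 0 → Kit n ζ₁ ζ₂ = 0 := by
    intro n
    induction n with
    | zero => intro ζ₁ ζ₂ h; rw [hKit0, h, map_zero, mul_zero, zero_mul]
    | succ n ih =>
      intro ζ₁ ζ₂ h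
      rw [hKitS]
      have : ∀ η, Kit n η ζ₂ = 0 := fun η => ih η ζ₂ h
      simp [this]
  -- the squared modulus of W and its measurable lower envelope
  set w : (ℝ × EuclideanSpace ℝ (Fin d)) → ℝ≥0∞ := fun η => (‖W η‖₊ : ℝ≥0∞) ^ 2 with hw
  obtain ⟨wE, hwE_meas, hwE_le, hwE_max⟩ := Stmt19Aux.exists_envelope
    (volume : Measure (ℝ × EuclideanSpace ℝ (Fin d))) w
  set Gh : ℝ → ℝ≥0∞ := fun t => ∫⁻ x : EuclideanSpace ℝ (Fin d), wE (t, x) with hGh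
  have hGh_meas : Measurable Gh := hwE_meas.lintegral_prod_right'
  -- the main inductive bound, via the measurable chain bound `Dm Gh`
  have main : ∀ n (ζ₁ ζ₂ : ℝ × EuclideanSpace ℝ (Fin d)), (‖Kit n ζ₁ ζ₂‖₊ : ℝ≥0∞) ≤
      ENNReal.ofReal (C ^ (2 ^ n)) * ((‖W ζ₁‖₊ : ℝ≥0∞) * ((‖W ζ₂‖₊ : ℝ≥0∞) *
        Dm Gh n ζ₁.1 ζ₂.1)) := by
    intro n
    induction n with
    | zero =>
      intro ζ₁ ζ₂
      rw [hKit0]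
      have hDm0 : Dm Gh 0 ζ₁.1 ζ₂.1 = jw ζ₁.1 ζ₂.1 := rfl
      rw [hDm0]
      calc (‖W ζ₁ * (starRingEnd ℂ) (W ζ₂) * K ζ₁ ζ₂‖₊ : ℝ≥0∞)
          = ((‖W ζ₁‖₊ : ℝ≥0∞) * (‖W ζ₂‖₊ : ℝ≥0∞)) * (‖K ζ₁ ζ₂‖₊ : ℝ≥0∞) := by
            rw [nnnorm_mul, nnnorm_mul, RCLike.nnnorm_conj]
            push_cast
            ring
        _ ≤ ((‖W ζ₁‖₊ : ℝ≥0∞) * (‖W ζ₂‖₊ : ℝ≥0∞)) * (ENNReal.ofReal C * jw ζ₁.1 ζ₂.1) := by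
            apply mul_le_mul_right
            rw [← ENNReal.ofReal_coe_nnreal, coe_nnnorm]
            calc ENNReal.ofReal ‖K ζ₁ ζ₂‖ ≤ ENNReal.ofReal (C * (1 + |ζ₁.1 - ζ₂.1|)⁻¹) :=
                ENNReal.ofReal_le_ofReal (hK ζ₁ ζ₂)
              _ = ENNReal.ofReal C * jw ζ₁.1 ζ₂.1 := by
                  rw [Stmt19Aux.jw, ← ENNReal.ofReal_mul hC]
        _ = ENNReal.ofReal (C ^ (2 ^ 0)) * ((‖W ζ₁‖₊ : ℝ≥0∞) * ((‖W ζ₂‖₊ : ℝ≥0∞) *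
            jw ζ₁.1 ζ₂.1)) := by
            rw [show (2 : ℕ) ^ 0 = 1 from rfl, pow_one]
            ring
    | succ n ih =>
      intro ζ₁ ζ₂
      set a := ζ₁.1 with ha
      set b := ζ₂.1 with hb
      set P : ℝ≥0∞ := ENNReal.ofReal (C ^ (2 ^ n)) with hP
      set Ψ : ℝ → ℝ≥0∞ := fun t => Dm Gh n a t * Dm Gh n t b with hΨ
      have hΨm : Measurable Ψ :=
        ((measurable_Dm Gh hGh_meas n).comp (measurable_const.prodMk measurable_id)).mul
          ((measurable_Dm Gh hGh_meas n).comp (measurable_id.prodMk measurable_const))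
      have hPfin : P ≠ ∞ := ENNReal.ofReal_ne_top
      have hDsucc : Dm Gh (n + 1) a b = ∫⁻ t : ℝ, Gh t * Ψ t := by
        show (∫⁻ t : ℝ, Gh t * (Dm Gh n a t * Dm Gh n t b)) = _
        rfl
      by_cases hfin : ∀ t, Ψ t ≠ ∞
      · -- the finite case: genuine estimation
        rw [hKitS]
        calc (‖∫ η, Kit n ζ₁ η * Kit n η ζ₂‖₊ : ℝ≥0∞)
            ≤ ∫⁻ η, (‖Kit n ζ₁ η * Kit n η ζ₂‖₊ : ℝ≥0∞) :=
              enorm_integral_le_lintegral_enorm _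
          _ = ∫⁻ η, (‖Kit n ζ₁ η‖₊ : ℝ≥0∞) * (‖Kit n η ζ₂‖₊ : ℝ≥0∞) := by
              apply lintegral_congr
              intro η
              rw [nnnorm_mul]
              push_cast
              ring
          _ ≤ ∫⁻ η, (P * ((‖W ζ₁‖₊ : ℝ≥0∞) * ((‖W η‖₊ : ℝ≥0∞) * Dm Gh n a η.1))) *
                (P * ((‖W η‖₊ : ℝ≥0∞) * ((‖W ζ₂‖₊ : ℝ≥0∞) * Dm Gh n η.1 b))) :=
              lintegral_mono fun η => mul_le_mul' (ih ζ₁ η) (ih η ζ₂)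
          _ = ∫⁻ η, ((P * P) * ((‖W ζ₁‖₊ : ℝ≥0∞) * (‖W ζ₂‖₊ : ℝ≥0∞))) * (w η * Ψ η.1) := by
              apply lintegral_congr
              intro η
              simp only [hw, hΨ]
              ring
          _ = ((P * P) * ((‖W ζ₁‖₊ : ℝ≥0∞) * (‖W ζ₂‖₊ : ℝ≥0∞))) * ∫⁻ η, w η * Ψ η.1 :=
              lintegral_const_mul' _ _ (by
                apply ENNReal.mul_ne_top (ENNReal.mul_ne_top hPfin hPfin)
                exact ENNReal.mul_ne_top ENNReal.coe_ne_top ENNReal.coe_ne_top)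
          _ ≤ ((P * P) * ((‖W ζ₁‖₊ : ℝ≥0∞) * (‖W ζ₂‖₊ : ℝ≥0∞))) * ∫⁻ t : ℝ, Gh t * Ψ t := by
              apply mul_le_mul_right
              have hkp := Stmt19Aux.key_push (volume : Measure ℝ)
                (volume : Measure (EuclideanSpace ℝ (Fin d))) w wE hwE_meas
                (fun u hu hle => hwE_max u hu hle) Ψ hΨm hfin
              calc (∫⁻ η, w η * Ψ η.1) ≤ ∫⁻ t : ℝ, (∫⁻ x, wE (t, x)) * Ψ t := hkp
                _ = ∫⁻ t : ℝ, Gh t * Ψ t := by rfl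
          _ = ENNReal.ofReal (C ^ (2 ^ (n + 1))) * ((‖W ζ₁‖₊ : ℝ≥0∞) * ((‖W ζ₂‖₊ : ℝ≥0∞) *
              Dm Gh (n + 1) a b)) := by
              rw [hDsucc, hP, ← ENNReal.ofReal_mul (by positivity), ← pow_add,
                show 2 ^ n + 2 ^ n = 2 ^ (n + 1) from by rw [pow_succ, Nat.mul_two]]
              ring
      · -- the degenerate case: the chain bound is infinite (or the prefactor vanishes)
        push_neg at hfin
        obtain ⟨t₀, ht₀⟩ := hfin
        have htop : ∀ x y, Dm Gh n x y = ∞ := by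
          rcases ENNReal.mul_eq_top.1 (show Dm Gh n a t₀ * Dm Gh n t₀ b = ⊤ from ht₀) with
            ⟨_, h2⟩ | ⟨h1, _⟩
          · exact Dm_top Gh hGh_meas n t₀ b h2
          · exact Dm_top Gh hGh_meas n a t₀ h1
        by_cases hC0 : C = 0
        · have := hz1 hC0 (n + 1) ζ₁ ζ₂
          simp [this]
        by_cases hW1 : W ζ₁ = 0
        · have := hz2 (n + 1) ζ₁ ζ₂ hW1
          simp [this]
        by_cases hW2 : W ζ₂ = 0
        · have := hz3 (n + 1) ζ₁ ζ₂ hW2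
          simp [this]
        -- now the right-hand side is infinite
        have hDtop : Dm Gh (n + 1) a b = ∞ := by
          cases n with
          | zero =>
            exact absurd (htop 0 0) (jw_ne_top 0 0)
          | succ n' =>
            have hGh_ne : ¬ (Gh =ᵐ[(volume : Measure ℝ)] 0) := by
              intro hae0
              have h00 : Dm Gh (n' + 1) 0 0 = 0 := by
                show (∫⁻ t : ℝ, Gh t * (Dm Gh n' 0 t * Dm Gh n' t 0)) = 0
                have hz : (fun t : ℝ => Gh t * (Dm Gh n' 0 t * Dm Gh n' t 0))
                    =ᵐ[(volume : Measure ℝ)] 0 := by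
                  filter_upwards [hae0] with t ht
                  simp [ht]
                rw [lintegral_congr_ae hz]
                simp
              rw [htop 0 0] at h00
              exact ENNReal.top_ne_zero h00
            have hIGh : (∫⁻ t : ℝ, Gh t) ≠ 0 := by
              rw [Ne, lintegral_eq_zero_iff hGh_meas]
              exact hGh_ne
            rw [hDsucc]
            have hint : (fun t : ℝ => Gh t * Ψ t) = fun t : ℝ => Gh t * ∞ := by
              funext t
              show Gh t * (Dm Gh (n' + 1) a t * Dm Gh (n' + 1) t b) = Gh t * ∞
              rw [htop a t, htop t b, ENNReal.top_mul_top]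
            rw [hint, lintegral_mul_const _ hGh_meas, ENNReal.mul_top hIGh]
        rw [hDtop]
        have hofr : ENNReal.ofReal (C ^ (2 ^ (n + 1))) ≠ 0 := by
          simp only [Ne, ENNReal.ofReal_eq_zero, not_le]
          have hCpos : (0 : ℝ) < C := lt_of_le_of_ne hC (Ne.symm hC0)
          positivity
        have hrhs : ENNReal.ofReal (C ^ (2 ^ (n + 1))) * ((‖W ζ₁‖₊ : ℝ≥0∞) *
            ((‖W ζ₂‖₊ : ℝ≥0∞) * ∞)) = ∞ := by
          rw [ENNReal.mul_top (show ((‖W ζ₂‖₊ : ℝ≥0∞)) ≠ 0 by simpa using hW2),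
            ENNReal.mul_top (show ((‖W ζ₁‖₊ : ℝ≥0∞)) ≠ 0 by simpa using hW1),
            ENNReal.mul_top hofr]
        rw [hrhs]
        exact le_top
  -- assembly of the final statement
  intro m N hm hN ζ₁ ζ₂
  subst hN
  obtain ⟨Kn, hKn⟩ : ∃ Kn, 2 ^ m = Kn + 1 :=
    ⟨2 ^ m - 1, by have := Nat.one_le_two_pow (n := m); omega⟩
  -- comparison of Gh with the true local mass
  have hGle : ∀ᵐ t : ℝ ∂(volume : Measure ℝ), Gh t ≤ ∫⁻ x, w (t, x) := by
    have h2 : ∀ᵐ (z : ℝ × EuclideanSpace ℝ (Fin d))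
        ∂((volume : Measure ℝ).prod (volume : Measure (EuclideanSpace ℝ (Fin d)))),
        wE z ≤ w z := hwE_le
    have h3 := Measure.ae_ae_of_ae_prod h2
    filter_upwards [h3] with t ht
    exact lintegral_mono_ae ht
  have hfinal : Bn Gh Kn ζ₁.1 ζ₂.1 ≤ ∫⁻ s : Fin Kn → ℝ, (∏ i, ∫⁻ x, w (s i, x)) *
      ∏ k : Fin (Kn + 1), jw (chainPts (Kn + 1) ζ₁.1 ζ₂.1 s k.castSucc)
        (chainPts (Kn + 1) ζ₁.1 ζ₂.1 s k.succ) :=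
    Bn_le_of_ae Gh _ hGle Kn ζ₁.1 ζ₂.1
  have hDm : Dm Gh m ζ₁.1 ζ₂.1 = Bn Gh Kn ζ₁.1 ζ₂.1 := by
    rw [Dm_eq_Bn Gh hGh_meas m]
    congr 1
    omega
  have hmain := main m ζ₁ ζ₂
  rw [hDm] at hmain
  rw [hKn]
  change _ ≤ _ * ∫⁻ s : Fin Kn → ℝ, (∏ i, ∫⁻ x, w (s i, x)) * ∏ k : Fin (Kn + 1), jw (chainPts (Kn + 1) ζ₁.1 ζ₂.1 s k.castSucc) (chainPts (Kn + 1) ζ₁.1 ζ₂.1 s k.succ)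
  calc (‖Kit m ζ₁ ζ₂‖₊ : ℝ≥0∞)
      ≤ ENNReal.ofReal (C ^ (2 ^ m)) * ((‖W ζ₁‖₊ : ℝ≥0∞) * ((‖W ζ₂‖₊ : ℝ≥0∞) *
          Bn Gh Kn ζ₁.1 ζ₂.1)) := hmain
    _ ≤ ENNReal.ofReal (C ^ (2 ^ m)) * ((‖W ζ₁‖₊ : ℝ≥0∞) * ((‖W ζ₂‖₊ : ℝ≥0∞) *
          ∫⁻ s : Fin Kn → ℝ, (∏ i, ∫⁻ x, w (s i, x)) *
            ∏ k : Fin (Kn + 1), jw (chainPts (Kn + 1) ζ₁.1 ζ₂.1 s k.castSucc)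
              (chainPts (Kn + 1) ζ₁.1 ζ₂.1 s k.succ))) := by
        exact mul_le_mul_right (mul_le_mul_right (mul_le_mul_right hfinal _) _) _
    _ = ENNReal.ofReal (C ^ (Kn + 1)) * (‖W ζ₁‖₊ : ℝ≥0∞) * (‖W ζ₂‖₊ : ℝ≥0∞) *
          ∫⁻ s : Fin Kn → ℝ, (∏ i, ∫⁻ x, w (s i, x)) *
            ∏ k : Fin (Kn + 1), jw (chainPts (Kn + 1) ζ₁.1 ζ₂.1 s k.castSucc)
              (chainPts (Kn + 1) ζ₁.1 ζ₂.1 s k.succ) := by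
        rw [hKn]
        ring
    _ = _ := rfl
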